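/- Let (X,d) be a metric space and S̄ a global control semigroup. For c > 0 define the metric d'_c = min(d, c), and the metric d''_c by d''_c(x,y) = max(c, d(x,y)) for x ≠ y and d''_c(x,x) = 0. Then for every c > 0: dim_S̄ (X, d'_c) = dim_S̄ (X, d'_1) (= m-dim_S̄ X) and dim_S̄ (X, d''_c) = dim_S̄ (X, d''_1) (= M-dim_S̄ X). -/

import Mathlib

open Filter Set Metric Topology
open scoped NNReal ENNReal

/-- A large-scale (asymptotic) dim-control function: continuous, increasing,
eventually at least the identity, tending to infinity. -/
def IsLSControl (f : ℝ≥0 → ℝ≥0) : Prop :=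
  Continuous f ∧ Monotone f ∧ (∀ᶠ x in atTop, x ≤ f x) ∧ Tendsto f atTop atTop

/-- Asymptotically linear: coincides with a linear function on a neighborhood of infinity. -/
def IsAsympLinear (f : ℝ≥0 → ℝ≥0) : Prop :=
  ∃ a b : ℝ≥0, ∀ᶠ x in atTop, f x = a * x + b

/-- A (large-scale) control semigroup. -/
def IsControlSemigroup (S : Set (ℝ≥0 → ℝ≥0)) : Prop :=
  (∀ f ∈ S, IsLSControl f) ∧
  (∀ f, IsLSControl f → IsAsympLinear f → f ∈ S) ∧
  (∀ f ∈ S, ∀ g ∈ S, f ∘ g ∈ S)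

/-- A family of subsets is `s`-disjoint if distinct members are at distance `> s`. -/
def SDisjoint {X : Type*} [MetricSpace X] (s : ℝ≥0) (𝒰 : Set (Set X)) : Prop :=
  ∀ U ∈ 𝒰, ∀ V ∈ 𝒰, U ≠ V → ∀ x ∈ U, ∀ y ∈ V, (s : ℝ) < dist x y

/-- A family of subsets is `D`-bounded if each member has diameter at most `D`. -/
def BoundedBy {X : Type*} [MetricSpace X] (D : ℝ≥0) (𝒰 : Set (Set X)) : Prop :=
  ∀ U ∈ 𝒰, EMetric.diam U ≤ (D : ℝ≥0∞)

/-- `asdim_S X ≤ n`. -/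
def ASDimLE (S : Set (ℝ≥0 → ℝ≥0)) (X : Type*) [MetricSpace X] (n : ℕ) : Prop :=
  ∃ f ∈ S, ∃ s₀ : ℝ≥0, ∀ s : ℝ≥0, s₀ ≤ s →
    ∃ 𝒰 : Fin (n + 1) → Set (Set X),
      (⋃ i, ⋃₀ 𝒰 i) = univ ∧ ∀ i, SDisjoint s (𝒰 i) ∧ BoundedBy (f s) (𝒰 i)

/-- The `S`-controlled asymptotic dimension, as an element of `ℕ∞`. -/
noncomputable def ASDim (S : Set (ℝ≥0 → ℝ≥0)) (X : Type*) [MetricSpace X] : ℕ∞ :=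
  sInf {k : ℕ∞ | ∃ n : ℕ, k = n ∧ ASDimLE S X n}

/-- `S₁ ⪯ S₂` : `S₂` is finer than `S₁`. -/
def Preceq (S₁ S₂ : Set (ℝ≥0 → ℝ≥0)) : Prop :=
  ∀ f ∈ S₂, ∃ g ∈ S₁, ∀ᶠ x in atTop, f x ≤ g x

/-- A small-scale dim-control function. -/
def IsSSControl (f : ℝ≥0 → ℝ≥0) : Prop :=
  Continuous f ∧ Monotone f ∧ f 0 = 0 ∧ ∀ᶠ x in 𝓝[>] (0 : ℝ≥0), x ≤ f x

/-- Coincides with a linear function on a neighborhood of `0`. -/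
def IsLinearNearZero (f : ℝ≥0 → ℝ≥0) : Prop :=
  ∃ a b : ℝ≥0, ∀ᶠ x in 𝓝 (0 : ℝ≥0), f x = a * x + b

/-- A small-scale control semigroup. -/
def IsSSControlSemigroup (ξ : Set (ℝ≥0 → ℝ≥0)) : Prop :=
  (∀ f ∈ ξ, IsSSControl f) ∧
  (∀ f, IsSSControl f → IsLinearNearZero f → f ∈ ξ) ∧
  (∀ f ∈ ξ, ∀ g ∈ ξ, f ∘ g ∈ ξ)

/-- A global dim-control function. -/
def IsGlobalControl (f : ℝ≥0 → ℝ≥0) : Prop :=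
  Continuous f ∧ Monotone f ∧ f 0 = 0 ∧ Tendsto f atTop atTop ∧
    (∀ᶠ x in 𝓝[>] (0 : ℝ≥0), x ≤ f x) ∧ (∀ᶠ x in atTop, x ≤ f x)

/-- A global control semigroup. -/
def IsGlobalControlSemigroup (S : Set (ℝ≥0 → ℝ≥0)) : Prop :=
  (∀ f ∈ S, IsGlobalControl f) ∧
  (∀ f, IsGlobalControl f → IsLinearNearZero f → IsAsympLinear f → f ∈ S) ∧
  (∀ f ∈ S, ∀ g ∈ S, f ∘ g ∈ S)

/-- `smdim_ξ X ≤ n`. -/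
def SMDimLE (ξ : Set (ℝ≥0 → ℝ≥0)) (X : Type*) [MetricSpace X] (n : ℕ) : Prop :=
  ∃ f ∈ ξ, ∃ s₀ : ℝ≥0, 0 < s₀ ∧ ∀ s : ℝ≥0, 0 < s → s ≤ s₀ →
    ∃ 𝒰 : Fin (n + 1) → Set (Set X),
      (⋃ i, ⋃₀ 𝒰 i) = univ ∧ ∀ i, SDisjoint s (𝒰 i) ∧ BoundedBy (f s) (𝒰 i)

/-- The `ξ`-controlled small-scale dimension. -/
noncomputable def SMDim (ξ : Set (ℝ≥0 → ℝ≥0)) (X : Type*) [MetricSpace X] : ℕ∞ :=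
  sInf {k : ℕ∞ | ∃ n : ℕ, k = n ∧ SMDimLE ξ X n}

/-- `dim_S̄ X ≤ n` (global dimension). -/
def GDimLE (S : Set (ℝ≥0 → ℝ≥0)) (X : Type*) [MetricSpace X] (n : ℕ) : Prop :=
  ∃ f ∈ S, ∀ s : ℝ≥0, 0 < s →
    ∃ 𝒰 : Fin (n + 1) → Set (Set X),
      (⋃ i, ⋃₀ 𝒰 i) = univ ∧ ∀ i, SDisjoint s (𝒰 i) ∧ BoundedBy (f s) (𝒰 i)

/-- The `S̄`-controlled global dimension. -/
noncomputable def GDim (S : Set (ℝ≥0 → ℝ≥0)) (X : Type*) [MetricSpace X] : ℕ∞ :=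
  sInf {k : ℕ∞ | ∃ n : ℕ, k = n ∧ GDimLE S X n}

/-- Large-scale truncation `Trunc^{**}(S̄)`. -/
def TruncInf (S : Set (ℝ≥0 → ℝ≥0)) : Set (ℝ≥0 → ℝ≥0) :=
  {g | IsLSControl g ∧ ∃ f ∈ S, ∀ᶠ x in atTop, g x = f x}

/-- Small-scale truncation `Trunc_{**}(S̄)`. -/
def TruncZero (S : Set (ℝ≥0 → ℝ≥0)) : Set (ℝ≥0 → ℝ≥0) :=
  {g | IsSSControl g ∧ ∃ f ∈ S, ∀ᶠ x in 𝓝 (0 : ℝ≥0), g x = f x}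

/-- The linked set `Link(ξ, S)`. -/
def Link (ξ S : Set (ℝ≥0 → ℝ≥0)) : Set (ℝ≥0 → ℝ≥0) :=
  {g | Continuous g ∧ Monotone g ∧
    ∃ g₁ ∈ ξ, ∃ g₂ ∈ S, (∀ᶠ x in 𝓝 (0 : ℝ≥0), g x = g₁ x) ∧ (∀ᶠ x in atTop, g x = g₂ x)}

/-- The distance function of an explicitly given metric space structure. -/
def MDist {X : Type*} (m : MetricSpace X) (x y : X) : ℝ :=
  @dist X m.toPseudoMetricSpace.toDist x y

section Aux

lemma linear_mem_gcs {Sb : Set (ℝ≥0 → ℝ≥0)} (hSb : IsGlobalControlSemigroup Sb)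
    (t : ℝ≥0) (ht : 1 ≤ t) : (fun x : ℝ≥0 => t * x) ∈ Sb := by
  apply hSb.2.1
  · refine ⟨by continuity, fun _ _ h => mul_le_mul_right h t, mul_zero t, ?_, ?_, ?_⟩
    · exact tendsto_atTop_mono (fun x => le_mul_of_one_le_left zero_le ht) tendsto_id
    · exact Filter.Eventually.of_forall fun x => le_mul_of_one_le_left zero_le ht
    · exact Filter.Eventually.of_forall fun x => le_mul_of_one_le_left zero_le ht
  · exact ⟨t, 0, Filter.Eventually.of_forall fun x => (add_zero _).symm⟩
  · exact ⟨t, 0, Filter.Eventually.of_forall fun x => (add_zero _).symm⟩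

lemma one_le_nninv {a : ℝ≥0} (ha : 0 < a) (ha1 : a ≤ 1) : 1 ≤ a⁻¹ := by
  rw [← mul_inv_cancel₀ ha.ne']
  exact mul_le_of_le_one_left zero_le ha1

lemma nninv_le_one {b : ℝ≥0} (hb : 1 ≤ b) : b⁻¹ ≤ 1 := by
  rw [← inv_one]
  exact inv_anti₀ one_pos hb

lemma ediam_le_mul {X : Type*} (m₁ m₂ : MetricSpace X) (b : ℝ≥0)
    (hup : ∀ x y : X, MDist m₁ x y ≤ (b : ℝ) * MDist m₂ x y) (U : Set X) :
    @EMetric.diam X m₁.toPseudoMetricSpace.toPseudoEMetricSpace U ≤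
      b * @EMetric.diam X m₂.toPseudoMetricSpace.toPseudoEMetricSpace U := by
  refine @EMetric.diam_le X U m₁.toPseudoMetricSpace.toPseudoEMetricSpace _
    (fun x hx y hy => ?_)
  have h1 : @edist X m₁.toEDist x y = ENNReal.ofReal (MDist m₁ x y) :=
    @edist_dist X m₁.toPseudoMetricSpace x y
  have h2 : @edist X m₂.toEDist x y = ENNReal.ofReal (MDist m₂ x y) :=
    @edist_dist X m₂.toPseudoMetricSpace x y
  calc @edist X m₁.toEDist x y = ENNReal.ofReal (MDist m₁ x y) := h1
    _ ≤ ENNReal.ofReal ((b : ℝ) * MDist m₂ x y) := ENNReal.ofReal_le_ofReal (hup x y)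
    _ = ENNReal.ofReal (b : ℝ) * ENNReal.ofReal (MDist m₂ x y) :=
        ENNReal.ofReal_mul b.coe_nonneg
    _ = (b : ℝ≥0∞) * @edist X m₂.toEDist x y := by rw [ENNReal.ofReal_coe_nnreal, h2]
    _ ≤ (b : ℝ≥0∞) * @EMetric.diam X m₂.toPseudoMetricSpace.toPseudoEMetricSpace U :=
        mul_le_mul_right (EMetric.edist_le_diam_of_mem hx hy) _

lemma gdimle_transfer {X : Type*} {Sb : Set (ℝ≥0 → ℝ≥0)} (hSb : IsGlobalControlSemigroup Sb)
    (m₁ m₂ : MetricSpace X) (a b : ℝ≥0) (ha : 0 < a) (ha1 : a ≤ 1) (hb : 1 ≤ b)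
    (hlow : ∀ x y : X, (a : ℝ) * MDist m₂ x y ≤ MDist m₁ x y)
    (hup : ∀ x y : X, MDist m₁ x y ≤ (b : ℝ) * MDist m₂ x y)
    (n : ℕ) (h : @GDimLE Sb X m₂ n) : @GDimLE Sb X m₁ n := by
  obtain ⟨f, hfS, hcov⟩ := h
  have hainv : (1 : ℝ≥0) ≤ a⁻¹ := one_le_nninv ha ha1
  have hg : ((fun x : ℝ≥0 => b * x) ∘ (f ∘ fun x : ℝ≥0 => a⁻¹ * x)) ∈ Sb :=
    hSb.2.2 _ (linear_mem_gcs hSb b hb) _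
      (hSb.2.2 f hfS _ (linear_mem_gcs hSb a⁻¹ hainv))
  refine ⟨_, hg, fun s hs => ?_⟩
  obtain ⟨𝒰, hcover, hprop⟩ := hcov (a⁻¹ * s) (by positivity)
  refine ⟨𝒰, hcover, fun i => ⟨?_, ?_⟩⟩
  · intro U hU V hV hUV x hx y hy
    have h2 := (hprop i).1 U hU V hV hUV x hx y hy
    show (s : ℝ) < MDist m₁ x y
    have hkey : (a : ℝ) * ((a⁻¹ * s : ℝ≥0) : ℝ) = (s : ℝ) := by
      push_cast
      field_simp
    calc (s : ℝ) = (a : ℝ) * ((a⁻¹ * s : ℝ≥0) : ℝ) := hkey.symm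
      _ < (a : ℝ) * MDist m₂ x y := by
          exact mul_lt_mul_of_pos_left h2 (by exact_mod_cast ha)
      _ ≤ MDist m₁ x y := hlow x y
  · intro U hU
    have hd := (hprop i).2 U hU
    show @EMetric.diam X m₁.toPseudoMetricSpace.toPseudoEMetricSpace U ≤
      ((b * f (a⁻¹ * s) : ℝ≥0) : ℝ≥0∞)
    calc @EMetric.diam X m₁.toPseudoMetricSpace.toPseudoEMetricSpace U
        ≤ b * @EMetric.diam X m₂.toPseudoMetricSpace.toPseudoEMetricSpace U :=
          ediam_le_mul m₁ m₂ b hup U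
      _ ≤ (b : ℝ≥0∞) * ((f (a⁻¹ * s) : ℝ≥0) : ℝ≥0∞) := mul_le_mul_right hd _
      _ = ((b * f (a⁻¹ * s) : ℝ≥0) : ℝ≥0∞) := by rw [ENNReal.coe_mul]

lemma gdim_eq_of_bilip {X : Type*} {Sb : Set (ℝ≥0 → ℝ≥0)} (hSb : IsGlobalControlSemigroup Sb)
    (m₁ m₂ : MetricSpace X) (a b : ℝ≥0) (ha : 0 < a) (ha1 : a ≤ 1) (hb : 1 ≤ b)
    (hlow : ∀ x y : X, (a : ℝ) * MDist m₂ x y ≤ MDist m₁ x y)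
    (hup : ∀ x y : X, MDist m₁ x y ≤ (b : ℝ) * MDist m₂ x y) :
    @GDim Sb X m₁ = @GDim Sb X m₂ := by
  have hb0 : (0 : ℝ≥0) < b := lt_of_lt_of_le one_pos hb
  have hlow' : ∀ x y : X, ((b⁻¹ : ℝ≥0) : ℝ) * MDist m₁ x y ≤ MDist m₂ x y := by
    intro x y
    rw [NNReal.coe_inv]
    rw [inv_mul_le_iff₀ (by exact_mod_cast hb0)]
    exact hup x y
  have hup' : ∀ x y : X, MDist m₂ x y ≤ ((a⁻¹ : ℝ≥0) : ℝ) * MDist m₁ x y := by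
    intro x y
    rw [NNReal.coe_inv]
    rw [le_inv_mul_iff₀ (show (0:ℝ) < (a:ℝ) by exact_mod_cast ha)]
    exact hlow x y
  unfold GDim
  congr 1
  ext k
  constructor
  · rintro ⟨n, rfl, hn⟩
    exact ⟨n, rfl, gdimle_transfer hSb m₂ m₁ b⁻¹ a⁻¹
      (by positivity) (nninv_le_one hb) (one_le_nninv ha ha1) hlow' hup' n hn⟩
  · rintro ⟨n, rfl, hn⟩
    exact ⟨n, rfl, gdimle_transfer hSb m₁ m₂ a b ha ha1 hb hlow hup n hn⟩

lemma min_ineq1 (c D : ℝ) (hc : 0 < c) (hD : 0 ≤ D) :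
    min c 1 * min D 1 ≤ min D c := by
  apply le_min
  · calc min c 1 * min D 1 ≤ 1 * D :=
        mul_le_mul (min_le_right _ _) (min_le_left _ _) (le_min hD zero_le_one) zero_le_one
      _ = D := one_mul D
  · calc min c 1 * min D 1 ≤ c * 1 :=
        mul_le_mul (min_le_left _ _) (min_le_right _ _) (le_min hD zero_le_one) hc.le
      _ = c := mul_one c

lemma min_ineq2 (c D : ℝ) (_hc : 0 < c) (hD : 0 ≤ D) :
    min D c ≤ max c 1 * min D 1 := by
  rcases le_total D 1 with h | h
  · rw [min_eq_left h]
    exact (min_le_left D c).trans (le_mul_of_one_le_left hD (le_max_right c 1))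
  · rw [min_eq_right h, mul_one]
    exact (min_le_right D c).trans (le_max_left c 1)

lemma max_ineq1 (c D : ℝ) (_hc : 0 < c) (hD : 0 ≤ D) :
    min c 1 * max 1 D ≤ max c D := by
  rcases le_total 1 D with h | h
  · rw [max_eq_right h]
    calc min c 1 * D ≤ 1 * D := mul_le_mul_of_nonneg_right (min_le_right c 1) hD
      _ = D := one_mul D
      _ ≤ max c D := le_max_right c D
  · rw [max_eq_left h, mul_one]
    exact (min_le_left c 1).trans (le_max_left c D)

lemma max_ineq2 (c D : ℝ) (_hc : 0 < c) (hD : 0 ≤ D) :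
    max c D ≤ max c 1 * max 1 D := by
  apply max_le
  · calc c ≤ max c 1 := le_max_left c 1
      _ = max c 1 * 1 := (mul_one _).symm
      _ ≤ max c 1 * max 1 D :=
        mul_le_mul_of_nonneg_left (le_max_left 1 D) (zero_le_one.trans (le_max_right c 1))
  · calc D ≤ max 1 D := le_max_right 1 D
      _ = 1 * max 1 D := (one_mul _).symm
      _ ≤ max c 1 * max 1 D :=
        mul_le_mul_of_nonneg_right (le_max_right c 1) (hD.trans (le_max_right 1 D))

end Aux

/-- The value of `c > 0` does not matter when truncating the metric below
(`d'_c = min (d, c)`) or above (`d''_c(x,y) = max (c, d(x,y))` for `x ≠ y`):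
the corresponding global dimensions agree with the `c = 1` case, i.e. with
`m-dim_S̄ X` and `M-dim_S̄ X` respectively. -/
theorem gdim_truncated_metric_indep_of_c (X : Type*) (m : MetricSpace X)
    (Sb : Set (ℝ≥0 → ℝ≥0)) (hSb : IsGlobalControlSemigroup Sb)
    (c : ℝ) (hc : 0 < c)
    (m'c m'1 m''c m''1 : MetricSpace X)
    (h'c : ∀ x y : X, MDist m'c x y = min (MDist m x y) c)
    (h'1 : ∀ x y : X, MDist m'1 x y = min (MDist m x y) 1)
    (h''c : ∀ x y : X, x ≠ y → MDist m''c x y = max c (MDist m x y))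
    (h''1 : ∀ x y : X, x ≠ y → MDist m''1 x y = max 1 (MDist m x y)) :
    @GDim Sb X m'c = @GDim Sb X m'1 ∧ @GDim Sb X m''c = @GDim Sb X m''1 := by
  set nc : ℝ≥0 := ⟨c, hc.le⟩ with hnc
  have hnc0 : (0 : ℝ≥0) < nc := by exact_mod_cast hc
  have hacoe : ((min nc 1 : ℝ≥0) : ℝ) = min c 1 := by
    rw [NNReal.coe_min]; rfl
  have hbcoe : ((max nc 1 : ℝ≥0) : ℝ) = max c 1 := by
    rw [NNReal.coe_max]; rfl
  have ha : (0 : ℝ≥0) < min nc 1 := lt_min hnc0 one_pos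
  have ha1 : min nc 1 ≤ 1 := min_le_right _ _
  have hb : (1 : ℝ≥0) ≤ max nc 1 := le_max_right _ _
  have hDnn : ∀ x y : X, 0 ≤ MDist m x y := fun x y =>
    @dist_nonneg X m.toPseudoMetricSpace x y
  constructor
  · apply gdim_eq_of_bilip hSb m'c m'1 (min nc 1) (max nc 1) ha ha1 hb
    · intro x y
      rw [hacoe, h'1, h'c]
      exact min_ineq1 c (MDist m x y) hc (hDnn x y)
    · intro x y
      rw [hbcoe, h'1, h'c]
      exact min_ineq2 c (MDist m x y) hc (hDnn x y)
  · apply gdim_eq_of_bilip hSb m''c m''1 (min nc 1) (max nc 1) ha ha1 hb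
    · intro x y
      by_cases hxy : x = y
      · subst hxy
        have h1 : MDist m''c x x = 0 := @dist_self X m''c.toPseudoMetricSpace x
        have h2 : MDist m''1 x x = 0 := @dist_self X m''1.toPseudoMetricSpace x
        rw [h1, h2, mul_zero]
      · rw [hacoe, h''1 x y hxy, h''c x y hxy]
        exact max_ineq1 c (MDist m x y) hc (hDnn x y)
    · intro x y
      by_cases hxy : x = y
      · subst hxy
        have h1 : MDist m''c x x = 0 := @dist_self X m''c.toPseudoMetricSpace x
        have h2 : MDist m''1 x x = 0 := @dist_self X m''1.toPseudoMetricSpace x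
        rw [h1, h2, mul_zero]
      · rw [hbcoe, h''1 x y hxy, h''c x y hxy]
        exact max_ineq2 c (MDist m x y) hc (hDnn x y)
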